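/- For every Laurent polynomial a ∈ ℂ[t,t⁻¹], the iterated super-bracket {[e_{w₃−w₁}(a), q_{w₁+w₄}], q_{w₁+w₂}} — that is, X·q_{w₁+w₂} + q_{w₁+w₂}·X where X = e_{w₃−w₁}(a)·q_{w₁+w₄} − q_{w₁+w₄}·e_{w₃−w₁}(a) — equals −Vir(a). (This is the alternative expression of the Virasoro element used in Section 7 of the paper, with signs fixed by the stated conventions.) -/

import Mathlib

open LaurentPolynomial Matrix

noncomputable section

/-- `R = ℂ[t,t⁻¹]`, the algebra of complex Laurent polynomials. -/
abbrev R := LaurentPolynomial ℂ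

/-- Differentiation on Laurent polynomials, as a `ℂ`-linear endomorphism:
`D (T n) = n • T (n-1)`, i.e. `D f = f'`. -/
noncomputable def Der : Module.End ℂ R :=
  (Finsupp.lsum ℂ fun n : ℤ =>
    LinearMap.toSpanSingleton ℂ R ((n : ℂ) • LaurentPolynomial.T (n - 1)) :
      (ℤ →₀ ℂ) →ₗ[ℂ] R) ∘ₗ (AddMonoidAlgebra.coeffLinearEquiv ℂ : R ≃ₗ[ℂ] (ℤ →₀ ℂ)).toLinearMap

/-- Multiplication by `a ∈ R` as a `ℂ`-linear endomorphism `m_a`. -/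
noncomputable def mulE (a : R) : Module.End ℂ R := LinearMap.mulLeft ℂ a

/-- The ring of operators `E = End_ℂ(R)`. -/
abbrev E := Module.End ℂ R

/-- 8×8 matrices over `E`, written as 2×2 blocks of 4×4 matrices. -/
abbrev M8 := Matrix (Fin 4 ⊕ Fin 4) (Fin 4 ⊕ Fin 4) E

/-- `b_{ij} = e_{ij} - e_{ji}` (entries are the identity operator); indices 0-based. -/
noncomputable def bMat (i j : Fin 4) : Matrix (Fin 4) (Fin 4) E :=
  Matrix.single i j 1 - Matrix.single j i 1

/-- `e_{w_i - w_j}(a) = [[e_{ij} m_a, 0],[0, -e_{ji} m_a]]`; indices 0-based. -/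
noncomputable def eW (i j : Fin 4) (a : R) : M8 :=
  Matrix.fromBlocks (Matrix.single i j (mulE a)) 0 0
    (-(Matrix.single j i (mulE a)))

/-- `h_{w_i - w_j}(a) = [[(e_{ii}-e_{jj}) m_a, 0],[0, (e_{jj}-e_{ii}) m_a]]`; indices 0-based. -/
noncomputable def hW (i j : Fin 4) (a : R) : M8 :=
  Matrix.fromBlocks
    (Matrix.single i i (mulE a) - Matrix.single j j (mulE a)) 0 0
    (Matrix.single j j (mulE a) - Matrix.single i i (mulE a))

/-- `φ` on the basis `b_{ij}` (`i < j`) of skew matrices (0-based indices):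
`φ(b₁₂) = b₃₄`, `φ(b₁₃) = -b₂₄`, `φ(b₁₄) = b₂₃`, `φ(b₂₃) = b₁₄`, `φ(b₂₄) = -b₁₃`,
`φ(b₃₄) = b₁₂` (the involution `k = k' + k'' ↦ k' - k''`). -/
noncomputable def phiB (i j : Fin 4) : Matrix (Fin 4) (Fin 4) E :=
  if i = 0 ∧ j = 1 then bMat 2 3
  else if i = 0 ∧ j = 2 then -(bMat 1 3)
  else if i = 0 ∧ j = 3 then bMat 1 2
  else if i = 1 ∧ j = 2 then bMat 0 3
  else if i = 1 ∧ j = 3 then -(bMat 0 2)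
  else if i = 2 ∧ j = 3 then bMat 0 1
  else 0

/-- `q_{w_i + w_j} = [[0, b_{ij}],[φ(b_{ij})D, 0]]` for `i < j`; indices 0-based. -/
noncomputable def qP (i j : Fin 4) : M8 :=
  Matrix.fromBlocks 0 (bMat i j) (phiB i j * Matrix.scalar (Fin 4) Der) 0

/-- `q_{-w_i - w_j}(a) = [[0,0],[(e_{ij}+e_{ji}) m_a, 0]]`; indices 0-based. -/
noncomputable def qM (i j : Fin 4) (a : R) : M8 :=
  Matrix.fromBlocks 0 0
    (Matrix.single i j (mulE a) + Matrix.single j i (mulE a)) 0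

/-- `Vir(a) = [[I₄ m_a D + e₁₁ m_{a'}, 0],[0, I₄ m_a D + (I₄ - e₁₁) m_{a'}]]`. -/
noncomputable def Vir (a : R) : M8 :=
  Matrix.fromBlocks
    (Matrix.scalar (Fin 4) (mulE a * Der) + Matrix.single 0 0 (mulE (Der a))) 0 0
    (Matrix.scalar (Fin 4) (mulE a * Der) +
      (Matrix.scalar (Fin 4) (mulE (Der a)) - Matrix.single 0 0 (mulE (Der a))))

lemma Der_single' (n : ℤ) (c : ℂ) :
    Der (AddMonoidAlgebra.single n c) = AddMonoidAlgebra.single (n-1) (c * n) := by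
  simp only [Der, LinearMap.comp_apply, LinearEquiv.coe_coe,
    AddMonoidAlgebra.coeffLinearEquiv_apply, AddMonoidAlgebra.coeff_single, Finsupp.lsum_single,
    LinearMap.toSpanSingleton_apply]
  rw [T, smul_smul, AddMonoidAlgebra.smul_single, smul_eq_mul, mul_one]

lemma Der_mul' (a b : R) : Der (a * b) = Der a * b + a * Der b := by
  induction a using LaurentPolynomial.induction_on' with
  | add p q hp hq => simp only [add_mul, map_add, hp, hq]; ring
  | C_mul_T n c =>
    induction b using LaurentPolynomial.induction_on' with
    | add p q hp hq => simp only [mul_add, map_add, hp, hq]; ring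
    | C_mul_T m d =>
      rw [← single_eq_C_mul_T, ← single_eq_C_mul_T]
      show Der (AddMonoidAlgebra.single n c * AddMonoidAlgebra.single m d) = _
      rw [AddMonoidAlgebra.single_mul_single]
      show Der (AddMonoidAlgebra.single (n+m) (c*d)) = _
      rw [Der_single', Der_single', Der_single']
      show _ = AddMonoidAlgebra.single (n-1) (c * n) * AddMonoidAlgebra.single m d
        + AddMonoidAlgebra.single n c * AddMonoidAlgebra.single (m-1) (d * m)
      rw [AddMonoidAlgebra.single_mul_single, AddMonoidAlgebra.single_mul_single]
      show _ = AddMonoidAlgebra.single (n-1+m) (c * n * d) + AddMonoidAlgebra.single (n+(m-1)) (c * (d * m))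
      rw [show n-1+m = n+m-1 by ring, show n+(m-1) = n+m-1 by ring, ← AddMonoidAlgebra.single_add]
      congr 1
      push_cast
      ring

lemma Der_comp_mulE (a : R) : Der * mulE a = mulE a * Der + mulE (Der a) := by
  ext f
  simp [mulE, Module.End.mul_apply, Der_mul', add_comm]

lemma std_mul_scalar (i j : Fin 4) (x c : E) :
    Matrix.single i j x * Matrix.scalar (Fin 4) c =
      Matrix.single i j (x * c) := by
  ext a b
  simp [Matrix.scalar_apply, Matrix.mul_diagonal, Matrix.single]

lemma scalar_mul_std (i j : Fin 4) (x c : E) :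
    Matrix.scalar (Fin 4) c * Matrix.single i j x =
      Matrix.single i j (c * x) := by
  ext a b
  simp [Matrix.scalar_apply, Matrix.diagonal_mul, Matrix.single]

lemma scalar_eq (c : E) : Matrix.scalar (Fin 4) c =
    Matrix.single 0 0 c + Matrix.single 1 1 c +
    Matrix.single 2 2 c + Matrix.single 3 3 c := by
  conv_lhs => rw [Matrix.matrix_eq_sum_single (Matrix.scalar (Fin 4) c)]
  simp [Fin.sum_univ_four, Matrix.scalar_apply, Matrix.diagonal_apply,
    Matrix.single_zero]

lemma fromBlocks_sub' {n m l o : Type*} (A A' : Matrix n l E) (B B' : Matrix n m E)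
    (C C' : Matrix o l E) (D D' : Matrix o m E) :
    Matrix.fromBlocks A B C D - Matrix.fromBlocks A' B' C' D' =
      Matrix.fromBlocks (A - A') (B - B') (C - C') (D - D') := by
  rw [sub_eq_add_neg, Matrix.fromBlocks_neg, Matrix.fromBlocks_add]
  simp [sub_eq_add_neg]

set_option maxHeartbeats 1000000 in
/-- `{[e_{w₃-w₁}(a), q_{w₁+w₄}], q_{w₁+w₂}} = -Vir(a)` (indices 0-based). -/
theorem stmt5 (a : R) :
    (eW 2 0 a * qP 0 3 - qP 0 3 * eW 2 0 a) * qP 0 1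
      + qP 0 1 * (eW 2 0 a * qP 0 3 - qP 0 3 * eW 2 0 a) = -Vir a := by
  have h : Der * mulE a = mulE a * Der + mulE (Der a) := Der_comp_mulE a
  have p03 : phiB 0 3 = bMat 1 2 := by simp [phiB]
  have p01 : phiB 0 1 = bMat 2 3 := by simp [phiB]
  rw [eW, qP, qP, p03, p01, Vir]
  rw [Matrix.fromBlocks_multiply, Matrix.fromBlocks_multiply, fromBlocks_sub',
    Matrix.fromBlocks_multiply, Matrix.fromBlocks_multiply, Matrix.fromBlocks_add,
    Matrix.fromBlocks_neg]
  refine Matrix.ext_iff_blocks.mpr ⟨?_, ?_, ?_, ?_⟩ <;>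
    simp only [Fin.reduceEq, not_false_eq_true, Matrix.toBlocks_fromBlocks₁₁,
      Matrix.toBlocks_fromBlocks₁₂, Matrix.toBlocks_fromBlocks₂₁, Matrix.toBlocks_fromBlocks₂₂,
      bMat, sub_mul, mul_sub, add_mul, mul_add, Matrix.neg_mul, Matrix.mul_neg,
      Matrix.mul_zero, Matrix.zero_mul, std_mul_scalar, scalar_mul_std,
      Matrix.single_mul_single_same, Matrix.single_mul_single_of_ne, ne_eq,
      one_mul, mul_one, sub_zero, zero_sub, add_zero, zero_add, neg_neg, neg_zero, sub_self] <;>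
    rw [h] <;> simp only [Matrix.single_add, scalar_eq] <;> abel

end
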